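/- Let 𝕂 be a field, let C = (C_m →^{∂_m} C_{m−1} → ⋯ →^{∂_1} C_0) be a chain complex of finite-dimensional 𝕂-vector spaces, let c = (c_m,…,c_0) be a complex basis of C and h = (h_m,…,h_0) a homology basis of C. Then the scalar τ(C;c,h) = ∏_{i=0}^m [(b_i h_i) b_{i−1}/c_i]^{(−1)^{i+1}} ∈ 𝕂* does not depend on the choice of the bases b_0, …, b_{m−1} of the boundary spaces B_0(C), …, B_{m−1}(C): any two such choices yield the same value of the product. -/

import Mathlib

open Matrix LinearMap

theorem basis_det_matrix {R : Type*} [CommRing R] {V : Type*} [AddCommGroup V] [Module R V]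
    {ι : Type*} [Fintype ι] [DecidableEq ι] (e : Module.Basis ι R V) (v w : ι → V)
    (M : Matrix ι ι R) (hw : ∀ k, w k = ∑ l, M k l • v l) :
    e.det w = M.det * e.det v := by
  rw [Module.Basis.det_apply, Module.Basis.det_apply]
  have hmat : e.toMatrix w = e.toMatrix v * Mᵀ := by
    ext r k
    simp only [Module.Basis.toMatrix_apply, hw, map_sum, _root_.map_smul, Matrix.mul_apply,
      Matrix.transpose_apply, Finsupp.coe_finset_sum, Finsupp.coe_smul, Finset.sum_apply,
      Pi.smul_apply, smul_eq_mul]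
    exact Finset.sum_congr rfl fun l _ => mul_comm _ _
  rw [hmat, Matrix.det_mul, Matrix.det_transpose, mul_comm]

theorem key_step {𝕂 : Type*} [Field 𝕂] {V Vprev : Type*}
    [AddCommGroup V] [Module 𝕂 V] [AddCommGroup Vprev] [Module 𝕂 Vprev]
    (dd : V →ₗ[𝕂] Vprev) (Bi : Submodule 𝕂 V)
    (κ1 κ0 ιh : Type) [Fintype κ1] [DecidableEq κ1] [Fintype κ0] [DecidableEq κ0]
    [Fintype ιh] [DecidableEq ιh]
    (cb : Module.Basis ((κ1 ⊕ ιh) ⊕ κ0) 𝕂 V)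
    (hb : Module.Basis ιh 𝕂 (↥(LinearMap.ker dd) ⧸
      Submodule.comap (LinearMap.ker dd).subtype Bi))
    (bB bB' : Module.Basis κ1 𝕂 Bi)
    (bP bP' : Module.Basis κ0 𝕂 (LinearMap.range dd))
    (ht ht' : ιh → V) (hZ : ∀ j, ht j ∈ LinearMap.ker dd) (hZ' : ∀ j, ht' j ∈ LinearMap.ker dd)
    (hh : ∀ j, hb j = Submodule.Quotient.mk ⟨ht j, hZ j⟩)
    (hh' : ∀ j, hb j = Submodule.Quotient.mk ⟨ht' j, hZ' j⟩)
    (bt bt' : κ0 → V)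
    (hbt : ∀ j, dd (bt j) = (bP j : Vprev)) (hbt' : ∀ j, dd (bt' j) = (bP' j : Vprev)) :
    cb.det (Sum.elim (Sum.elim (fun j => (bB' j : V)) ht') bt')
      = ((bB.toMatrix ⇑bB').det * (bP.toMatrix ⇑bP').det)
        * cb.det (Sum.elim (Sum.elim (fun j => (bB j : V)) ht) bt) := by
  classical
  set P : Matrix κ1 κ1 𝕂 := Matrix.of fun j l => bB.repr (bB' j) l with hP
  set Q : Matrix κ0 κ0 𝕂 := Matrix.of fun j l => bP.repr (bP' j) l with hQ
  -- fact 1 : expression of bB' in terms of bB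
  have fact1 : ∀ j, ((bB' j : V)) = ∑ l, P j l • (bB l : V) := by
    intro j
    have h1 := bB.sum_repr (bB' j)
    calc ((bB' j : V)) = ((∑ l, bB.repr (bB' j) l • bB l : Bi) : V) := by rw [h1]
      _ = ∑ l, P j l • (bB l : V) := by
          rw [Submodule.coe_sum]; simp [hP]
  -- fact 2 : ht' = ht + boundary
  have hmemE : ∀ j, ht' j - ht j ∈ Bi := by
    intro j
    have e1 : (Submodule.Quotient.mk ⟨ht j, hZ j⟩ :
        ↥(LinearMap.ker dd) ⧸ Submodule.comap (LinearMap.ker dd).subtype Bi)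
        = Submodule.Quotient.mk ⟨ht' j, hZ' j⟩ := (hh j).symm.trans (hh' j)
    rw [Submodule.Quotient.eq] at e1
    have e2 := e1
    rw [Submodule.mem_comap] at e2
    have : ht j - ht' j ∈ Bi := e2
    simpa using neg_mem this
  set E : Matrix ιh κ1 𝕂 := Matrix.of fun j l => bB.repr ⟨ht' j - ht j, hmemE j⟩ l with hE
  have fact2 : ∀ j, ht' j = ∑ l, E j l • (bB l : V) + ht j := by
    intro j
    have h1 := bB.sum_repr ⟨ht' j - ht j, hmemE j⟩
    have h2 : ((∑ l, bB.repr ⟨ht' j - ht j, hmemE j⟩ l • bB l : Bi) : V) = ht' j - ht j := by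
      rw [h1]
    rw [show ((∑ l, bB.repr ⟨ht' j - ht j, hmemE j⟩ l • bB l : Bi) : V)
        = ∑ l, E j l • (bB l : V) by rw [Submodule.coe_sum]; simp [hE]] at h2
    rw [h2]; abel
  -- fact 3 : bt' in terms of everything
  have zmem : ∀ j, bt' j - ∑ l, Q j l • bt l ∈ LinearMap.ker dd := by
    intro j
    have h1 := bP.sum_repr (bP' j)
    have h2 : ((∑ l, bP.repr (bP' j) l • bP l : LinearMap.range dd) : Vprev)
        = (bP' j : Vprev) := by rw [h1]
    rw [LinearMap.mem_ker, map_sub, map_sum, sub_eq_zero, hbt', ← h2]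
    simp only [AddSubmonoidClass.coe_finset_sum, SetLike.val_smul]
    exact Finset.sum_congr rfl fun x _ => by rw [_root_.map_smul, hbt]; rfl
  set G : Matrix κ0 ιh 𝕂 := Matrix.of fun j t =>
    hb.repr (Submodule.Quotient.mk ⟨bt' j - ∑ l, Q j l • bt l, zmem j⟩) t with hG
  have memF : ∀ j, (bt' j - ∑ l, Q j l • bt l) - ∑ t, G j t • ht t ∈ Bi := by
    intro j
    have h1 := hb.sum_repr (Submodule.Quotient.mk ⟨bt' j - ∑ l, Q j l • bt l, zmem j⟩)
    rw [show (∑ t, hb.repr (Submodule.Quotient.mk ⟨bt' j - ∑ l, Q j l • bt l, zmem j⟩) t • hb t)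
        = ∑ t, G j t • Submodule.Quotient.mk ⟨ht t, hZ t⟩ by
          refine Finset.sum_congr rfl fun t _ => ?_
          rw [← hh t]; rfl] at h1
    have h2 : (Submodule.Quotient.mk (∑ t, G j t • (⟨ht t, hZ t⟩ : LinearMap.ker dd)) :
        ↥(LinearMap.ker dd) ⧸ Submodule.comap (LinearMap.ker dd).subtype Bi)
        = Submodule.Quotient.mk ⟨bt' j - ∑ l, Q j l • bt l, zmem j⟩ := by
      rw [← h1]
      calc (Submodule.Quotient.mk (∑ t, G j t • (⟨ht t, hZ t⟩ : LinearMap.ker dd)) :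
          ↥(LinearMap.ker dd) ⧸ Submodule.comap (LinearMap.ker dd).subtype Bi)
          = (Submodule.comap (LinearMap.ker dd).subtype Bi).mkQ
            (∑ t, G j t • (⟨ht t, hZ t⟩ : LinearMap.ker dd)) := rfl
        _ = ∑ t, G j t • (Submodule.comap (LinearMap.ker dd).subtype Bi).mkQ
            (⟨ht t, hZ t⟩ : LinearMap.ker dd) := by
              rw [map_sum]
              exact Finset.sum_congr rfl fun t _ => by rw [_root_.map_smul]
        _ = ∑ t, G j t • Submodule.Quotient.mk (⟨ht t, hZ t⟩ : LinearMap.ker dd) := rfl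
    rw [Eq.comm, Submodule.Quotient.eq, Submodule.mem_comap] at h2
    have h3 : ((⟨bt' j - ∑ l, Q j l • bt l, zmem j⟩ - ∑ t, G j t • (⟨ht t, hZ t⟩ :
        LinearMap.ker dd) : LinearMap.ker dd) : V)
        = (bt' j - ∑ l, Q j l • bt l) - ∑ t, G j t • ht t := by
      simp
    rw [← h3]
    exact h2
  set F : Matrix κ0 κ1 𝕂 := Matrix.of fun j l =>
    bB.repr ⟨(bt' j - ∑ l, Q j l • bt l) - ∑ t, G j t • ht t, memF j⟩ l with hF
  have fact3 : ∀ j, bt' j = (∑ l, F j l • (bB l : V) + ∑ t, G j t • ht t)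
      + ∑ l, Q j l • bt l := by
    intro j
    have h1 := bB.sum_repr ⟨(bt' j - ∑ l, Q j l • bt l) - ∑ t, G j t • ht t, memF j⟩
    have h2 : ((∑ l, bB.repr ⟨(bt' j - ∑ l, Q j l • bt l) - ∑ t, G j t • ht t, memF j⟩ l
        • bB l : Bi) : V) = (bt' j - ∑ l, Q j l • bt l) - ∑ t, G j t • ht t := by rw [h1]
    rw [show ((∑ l, bB.repr ⟨(bt' j - ∑ l, Q j l • bt l) - ∑ t, G j t • ht t, memF j⟩ l
        • bB l : Bi) : V) = ∑ l, F j l • (bB l : V) by rw [Submodule.coe_sum]; simp [hF]] at h2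
    rw [h2]; abel
  -- assemble the matrix
  set M : Matrix ((κ1 ⊕ ιh) ⊕ κ0) ((κ1 ⊕ ιh) ⊕ κ0) 𝕂 :=
    Matrix.fromBlocks (Matrix.fromBlocks P 0 E 1) 0
      (Matrix.of fun j => Sum.elim (F j) (G j)) Q with hM
  have hw : ∀ k, (Sum.elim (Sum.elim (fun j => (bB' j : V)) ht') bt') k
      = ∑ l, M k l • (Sum.elim (Sum.elim (fun j => (bB j : V)) ht) bt) l := by
    intro k
    obtain ((j | j) | j) := k
    · simp only [Sum.elim_inl, Fintype.sum_sum_type, hM,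
        Matrix.fromBlocks_apply₁₁, Matrix.fromBlocks_apply₁₂,
        Matrix.zero_apply, zero_smul, Finset.sum_const_zero, add_zero]
      rw [fact1 j]
    · simp only [Sum.elim_inl, Sum.elim_inr, Fintype.sum_sum_type, hM,
        Matrix.fromBlocks_apply₁₁, Matrix.fromBlocks_apply₁₂,
        Matrix.zero_apply, zero_smul, Finset.sum_const_zero, add_zero]
      rw [fact2 j]
      simp [Matrix.fromBlocks_apply₂₁, Matrix.fromBlocks_apply₂₂, Matrix.one_apply,
        ite_smul, Finset.sum_ite_eq]
    · simp only [Sum.elim_inr, Fintype.sum_sum_type, hM,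
        Matrix.fromBlocks_apply₂₁, Matrix.fromBlocks_apply₂₂]
      rw [fact3 j]
      simp
  rw [basis_det_matrix cb _ _ M hw]
  congr 1
  rw [hM, Matrix.det_fromBlocks_zero₁₂, Matrix.det_fromBlocks_zero₁₂, Matrix.det_one, mul_one]
  have hPd : P.det = (bB.toMatrix ⇑bB').det := by
    rw [← Matrix.det_transpose (bB.toMatrix ⇑bB')]
    congr 1
  have hQd : Q.det = (bP.toMatrix ⇑bP').det := by
    rw [← Matrix.det_transpose (bP.toMatrix ⇑bP')]
    congr 1
  rw [hPd, hQd]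


/-- The boundary maps of a chain complex
`C = (C_m →^{∂_m} C_{m-1} → ⋯ →^{∂_1} C_0)` (given by the maps
`δ i = ∂_{i+1} : C_{i+1} → C_i`), repackaged paper-style with the convention
`∂_0 = 0` : `paperBoundary δ j : C j →ₗ C (j-1)` is `δ (j-1) = ∂_j` for `j ≥ 1`
and `0` for `j = 0`.  In particular `Z_i(C) = ker (paperBoundary δ i)` and
`B_i(C) = range (paperBoundary δ (i+1))`. -/
def paperBoundary {𝕂 : Type*} [Field 𝕂] {C : ℕ → Type*} [∀ i, AddCommGroup (C i)]
    [∀ i, Module 𝕂 (C i)] (δ : ∀ i : ℕ, C (i + 1) →ₗ[𝕂] C i) :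
    ∀ j : ℕ, C j →ₗ[𝕂] C (j - 1)
  | 0 => 0
  | j + 1 => δ j

/-- Let `𝕂` be a field, `C = (C_m → ⋯ → C_0)` a chain complex of
finite-dimensional `𝕂`-vector spaces, `c = (c_m, …, c_0)` a complex basis of `C` and
`h = (h_m, …, h_0)` a homology basis of `C`.  Then the scalar
`τ(C; c, h) = ∏_{i=0}^m [(b_i h_i) b_{i-1}/c_i]^{(-1)^{i+1}} ∈ 𝕂*` does not depend on
the choice of the bases `b_0, …, b_{m-1}` of the boundary spaces `B_0(C), …, B_{m-1}(C)`
(nor on the chosen lifts): any two such choices yield the same value of the product.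
Here, for each `i`, `b i` is a basis of `B_{i-1}(C) = im ∂_i`, `btil i` is a family of
elements of `C_i` mapped bijectively by `∂_i` onto `b i`, and `htil i` is a family of
cycles in `Z_i(C) = ker ∂_i` whose classes form the basis `h i` of `H_i(C)`; the
determinant `[(b_i h_i) b_{i-1}/c_i]` is computed in the basis `c i` of `C_i`. -/
theorem stmt_2 {𝕂 : Type*} [Field 𝕂] (m : ℕ)
    (C : ℕ → Type*) [∀ i, AddCommGroup (C i)] [∀ i, Module 𝕂 (C i)]
    [∀ i, FiniteDimensional 𝕂 (C i)]
    (δ : ∀ i : ℕ, C (i + 1) →ₗ[𝕂] C i)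
    (hcomplex : ∀ i, (δ i).comp (δ (i + 1)) = 0)
    (hzero : ∀ i, m ≤ i → δ i = 0)
    (κ ιh : ℕ → Type)
    [∀ i, Fintype (κ i)] [∀ i, DecidableEq (κ i)]
    [∀ i, Fintype (ιh i)] [∀ i, DecidableEq (ιh i)]
    -- the complex basis `c` and the homology basis `h`
    (c : ∀ i, Module.Basis ((κ (i + 1) ⊕ ιh i) ⊕ κ i) 𝕂 (C i))
    (h : ∀ i, Module.Basis (ιh i) 𝕂
      (↥(LinearMap.ker (paperBoundary δ i)) ⧸
        Submodule.comap (LinearMap.ker (paperBoundary δ i)).subtype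
          (LinearMap.range (paperBoundary δ (i + 1)))))
    -- first choice of boundary bases and lifts
    (b : ∀ i, Module.Basis (κ i) 𝕂 (LinearMap.range (paperBoundary δ i)))
    (htil : ∀ i, ιh i → C i)
    (hZ : ∀ i j, htil i j ∈ LinearMap.ker (paperBoundary δ i))
    (hh : ∀ i j, h i j = Submodule.Quotient.mk ⟨htil i j, hZ i j⟩)
    (btil : ∀ i, κ i → C i)
    (hbtil : ∀ i j, paperBoundary δ i (btil i j) = (b i j : C (i - 1)))
    -- second choice of boundary bases and lifts
    (b' : ∀ i, Module.Basis (κ i) 𝕂 (LinearMap.range (paperBoundary δ i)))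
    (htil' : ∀ i, ιh i → C i)
    (hZ' : ∀ i j, htil' i j ∈ LinearMap.ker (paperBoundary δ i))
    (hh' : ∀ i j, h i j = Submodule.Quotient.mk ⟨htil' i j, hZ' i j⟩)
    (btil' : ∀ i, κ i → C i)
    (hbtil' : ∀ i j, paperBoundary δ i (btil' i j) = (b' i j : C (i - 1))) :
    ∏ i ∈ Finset.range (m + 1),
        ((c i).det (Sum.elim (Sum.elim (fun j => ((b (i + 1) j).1 : C i)) (htil i)) (btil i)))
          ^ ((-1 : ℤ) ^ (i + 1))
      = ∏ i ∈ Finset.range (m + 1),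
        ((c i).det (Sum.elim (Sum.elim (fun j => ((b' (i + 1) j).1 : C i)) (htil' i)) (btil' i)))
          ^ ((-1 : ℤ) ^ (i + 1)) := by
  classical
  set p : ℕ → 𝕂 := fun i => ((b i).toMatrix ⇑(b' i)).det with hp
  have hpne : ∀ i, p i ≠ 0 := by
    intro i
    haveI := (b i).invertibleToMatrix (b' i)
    exact (Matrix.isUnit_det_of_invertible _).ne_zero
  have hempty : ∀ i, paperBoundary δ i = 0 → IsEmpty (κ i) := by
    intro i h0
    by_contra hne
    rw [not_isEmpty_iff] at hne
    obtain ⟨j⟩ := hne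
    obtain ⟨x, hx⟩ := (b i j).2
    have hx0 : ((b i) j : C (i - 1)) = 0 := by
      rw [← hx, h0]; rfl
    exact (b i).ne_zero j (Subtype.ext hx0)
  have hp0 : p 0 = 1 := by
    haveI : IsEmpty (κ 0) := hempty 0 rfl
    simp [hp, Matrix.det_isEmpty]
  have hpm1 : p (m + 1) = 1 := by
    haveI : IsEmpty (κ (m + 1)) := hempty (m + 1) (by
      show (δ m : C (m+1) →ₗ[𝕂] C m) = 0
      exact hzero m le_rfl)
    simp [hp, Matrix.det_isEmpty]
  have key : ∀ i,
      ((c i).det (Sum.elim (Sum.elim (fun j => ((b' (i + 1) j).1 : C i)) (htil' i)) (btil' i)))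
      = (p (i + 1) * p i) *
      ((c i).det (Sum.elim (Sum.elim (fun j => ((b (i + 1) j).1 : C i)) (htil i)) (btil i))) := by
    intro i
    exact key_step (paperBoundary δ i) (LinearMap.range (paperBoundary δ (i + 1)))
      (κ (i + 1)) (κ i) (ιh i) (c i) (h i)
      (b (i + 1)) (b' (i + 1)) (b i) (b' i)
      (htil i) (htil' i) (hZ i) (hZ' i) (hh i) (hh' i)
      (btil i) (btil' i) (hbtil i) (hbtil' i)
  rw [show (∏ i ∈ Finset.range (m + 1),
        ((c i).det (Sum.elim (Sum.elim (fun j => ((b' (i + 1) j).1 : C i)) (htil' i)) (btil' i)))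
          ^ ((-1 : ℤ) ^ (i + 1)))
      = (∏ i ∈ Finset.range (m + 1), (p (i + 1)) ^ ((-1 : ℤ) ^ (i + 1)))
        * (∏ i ∈ Finset.range (m + 1), (p i) ^ ((-1 : ℤ) ^ (i + 1)))
        * ∏ i ∈ Finset.range (m + 1),
        ((c i).det (Sum.elim (Sum.elim (fun j => ((b (i + 1) j).1 : C i)) (htil i)) (btil i)))
          ^ ((-1 : ℤ) ^ (i + 1)) from by
      rw [← Finset.prod_mul_distrib, ← Finset.prod_mul_distrib]
      exact Finset.prod_congr rfl fun i _ => by rw [key i, mul_zpow, mul_zpow]]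
  have htel : (∏ i ∈ Finset.range (m + 1), (p (i + 1)) ^ ((-1 : ℤ) ^ (i + 1)))
      * (∏ i ∈ Finset.range (m + 1), (p i) ^ ((-1 : ℤ) ^ (i + 1))) = 1 := by
    rw [Finset.prod_range_succ, hpm1, _root_.one_zpow, mul_one]
    rw [Finset.prod_range_succ' (fun i => (p i) ^ ((-1 : ℤ) ^ (i + 1))) m]
    rw [hp0, _root_.one_zpow, mul_one, ← Finset.prod_mul_distrib]
    apply Finset.prod_eq_one
    intro i _
    rw [← zpow_add₀ (hpne (i + 1))]
    have : ((-1 : ℤ) ^ (i + 1) + (-1 : ℤ) ^ (i + 1 + 1)) = 0 := by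
      rw [pow_succ ( -1 : ℤ) (i + 1)]; ring
    rw [this, zpow_zero]
  rw [htel, one_mul]
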